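/- Let λ > 0 with θ_λ ∈ (0, π/2) defined by tan θ_λ = 1/λ, let m ∈ (0, θ_λ], let μ_L, μ_D : (0, m] → ℝ be functions, and let (ψ, a_c) be a correction pair. Suppose φ ∈ (0, m] and a ∈ [0, 1) satisfy both (A) a/(1 − a) + (sin θ_λ · sin φ / cos(θ_λ − φ)) · ψ((a − a_c)_+)/(1 − a)² = g(φ) and (B) μ_L(φ) − tan(θ_λ − φ) μ_D(φ) = μ_G(φ) + (cos θ_λ · sin² φ / cos(θ_λ − φ)) · ψ((a − a_c)_+)/(1 − a)², and define a' := (1 − a)(μ_L(φ) sin φ − μ_D(φ) cos φ)/(λ sin² φ). Then (φ, a, a') satisfies all three equations of the corrected BEM system (in particular a' ≠ −1). -/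

import Mathlib

open Real Set

/-- The function `g(φ) = cot φ · tan(θ − φ) + (μ_D(φ)/sin φ)(1 + cot φ · tan(θ − φ))`. -/
noncomputable def gBEM (θ : ℝ) (μD : ℝ → ℝ) (φ : ℝ) : ℝ :=
  (Real.cos φ / Real.sin φ) * Real.tan (θ - φ) +
    (μD φ / Real.sin φ) * (1 + (Real.cos φ / Real.sin φ) * Real.tan (θ - φ))

/-- The implicit equation `E(φ, a)`:
`a/(1−a) + (sin θ · sin φ / cos(θ−φ)) · ψ((a−a_c)_+)/(1−a)² = g(φ)`. -/
def EBEM (θ : ℝ) (μD ψ : ℝ → ℝ) (ac φ a : ℝ) : Prop :=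
  a / (1 - a) +
      (Real.sin θ * Real.sin φ / Real.cos (θ - φ)) * ψ (max (a - ac) 0) / (1 - a) ^ 2
    = gBEM θ μD φ


/-- Reciprocal for the corrected model: if `φ ∈ (0, m]` and `a ∈ [0, 1)`
satisfy (A) the implicit equation `E(φ, a)` and (B) the corrected scalar equation, and `a'`
is defined from equation (iii), then `(φ, a, a')` solves the whole corrected BEM system
(in particular `a' ≠ −1`). -/
theorem bem_corrected_sufficiency
    (lam θ m : ℝ) (hlam : 0 < lam) (hθ : θ ∈ Ioo 0 (π / 2))
    (htan : Real.tan θ = 1 / lam) (hm : m ∈ Ioc 0 θ)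
    (μL μD : ℝ → ℝ)
    (ac : ℝ) (hac : ac ∈ Ioo (0 : ℝ) 1)
    (ψ : ℝ → ℝ) (hψc : ContinuousOn ψ (Ici 0)) (hψmono : MonotoneOn ψ (Ici 0))
    (hψ0 : ψ 0 = 0) (hψnn : ∀ x ∈ Ici (0 : ℝ), 0 ≤ ψ x)
    (φ a a' : ℝ) (hφ : φ ∈ Ioc 0 m) (ha : a ∈ Ico (0 : ℝ) 1)
    (hA : EBEM θ μD ψ ac φ a)
    (hB : μL φ - Real.tan (θ - φ) * μD φ
        = Real.sin φ * Real.tan (θ - φ) +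
          (Real.cos θ * Real.sin φ ^ 2 / Real.cos (θ - φ)) * ψ (max (a - ac) 0) / (1 - a) ^ 2)
    (ha'def : a' = (1 - a) * (μL φ * Real.sin φ - μD φ * Real.cos φ) / (lam * Real.sin φ ^ 2)) :
    a' ≠ -1 ∧
    Real.tan φ = (1 - a) / (lam * (1 + a')) ∧
    a / (1 - a)
      = (μL φ * Real.cos φ + μD φ * Real.sin φ) / Real.sin φ ^ 2
        - ψ (max (a - ac) 0) / (1 - a) ^ 2 ∧
    a' / (1 - a)
      = (μL φ * Real.sin φ - μD φ * Real.cos φ) / (lam * Real.sin φ ^ 2) := by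
  obtain ⟨hθ0, hθ2⟩ := hθ
  obtain ⟨hm0, hmθ⟩ := hm
  obtain ⟨hφ0, hφm⟩ := hφ
  obtain ⟨ha0, ha1⟩ := ha
  have hφθ : φ ≤ θ := hφm.trans hmθ
  have hpi := Real.pi_pos
  have hs : 0 < Real.sin φ := Real.sin_pos_of_pos_of_lt_pi hφ0 (by linarith)
  have hc : 0 < Real.cos φ := Real.cos_pos_of_mem_Ioo ⟨by linarith, by linarith⟩
  have hsθ : 0 < Real.sin θ := Real.sin_pos_of_pos_of_lt_pi hθ0 (by linarith)
  have hcθ : 0 < Real.cos θ := Real.cos_pos_of_mem_Ioo ⟨by linarith, hθ2⟩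
  have hD : 0 < Real.cos θ * Real.cos φ + Real.sin θ * Real.sin φ := by positivity
  have hDc : Real.cos (θ - φ) = Real.cos θ * Real.cos φ + Real.sin θ * Real.sin φ :=
    Real.cos_sub θ φ
  have h1a : 0 < 1 - a := by linarith
  have hT : Real.tan (θ - φ)
      = (Real.sin θ * Real.cos φ - Real.cos θ * Real.sin φ) /
        (Real.cos θ * Real.cos φ + Real.sin θ * Real.sin φ) := by
    rw [Real.tan_eq_sin_div_cos, Real.sin_sub, Real.cos_sub]
  have hlamS : lam * Real.sin θ = Real.cos θ := by
    rw [Real.tan_eq_sin_div_cos] at htan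
    field_simp at htan
    linarith
  set s := Real.sin φ with hsdef
  set c := Real.cos φ with hcdef
  set S := Real.sin θ with hSdef
  set C := Real.cos θ with hCdef
  set P := ψ (max (a - ac) 0) with hPdef
  -- cleaned form of hA
  have hAc : a * (1 - a) * s ^ 2 * (C * c + S * s) + S * s ^ 3 * P
      = c * s * (S * c - C * s) * (1 - a) ^ 2
        + μD φ * s * (C * c + S * s) * (1 - a) ^ 2
        + μD φ * c * (S * c - C * s) * (1 - a) ^ 2 := by
    refine mul_right_cancel₀ (b := s * (C * c + S * s) ^ 2 * (1 - a)) (by positivity) ?_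
    unfold EBEM gBEM at hA
    rw [hT, hDc] at hA
    rw [← hsdef, ← hcdef, ← hSdef, ← hPdef] at hA
    field_simp at hA
    linear_combination (s * (C * c + S * s) ^ 2 * (1 - a)) * hA
  -- cleaned form of hB
  have hBc : μL φ * (C * c + S * s) * (1 - a) ^ 2
        - μD φ * (S * c - C * s) * (1 - a) ^ 2
      = s * (S * c - C * s) * (1 - a) ^ 2 + C * s ^ 2 * P := by
    refine mul_right_cancel₀ (b := (C * c + S * s) ^ 2) (by positivity) ?_
    rw [hT, hDc] at hB
    field_simp at hB
    linear_combination ((C * c + S * s) ^ 2) * hB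
  -- equation (ii), with the factor D
  have h2 : a * (1 - a) * s ^ 2 * (C * c + S * s)
      = ((μL φ * c + μD φ * s) * (1 - a) ^ 2 - s ^ 2 * P) * (C * c + S * s) := by
    linear_combination hAc - c * hBc
  have h2' : a * (1 - a) * s ^ 2
      = (μL φ * c + μD φ * s) * (1 - a) ^ 2 - s ^ 2 * P :=
    mul_right_cancel₀ (ne_of_gt hD) h2
  -- cleaned form of ha'def
  have hadc : lam * a' * s ^ 2 = (1 - a) * (μL φ * s - μD φ * c) := by
    rw [ha'def]; field_simp
  -- the key identity
  have keyM : lam * s * (1 + a') * (S * s * (1 - a)) = (1 - a) * c * (S * s * (1 - a)) := by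
    linear_combination hBc + C * h2' + S * (1 - a) * hadc + (1 - a) * s ^ 2 * hlamS
  have key : lam * s * (1 + a') = (1 - a) * c :=
    mul_right_cancel₀ (b := S * s * (1 - a)) (by positivity) keyM
  have h1a' : 0 < 1 + a' := by
    have hls : 0 < lam * s := mul_pos hlam hs
    have h0 : 0 < lam * s * (1 + a') := by rw [key]; exact mul_pos h1a hc
    exact (mul_pos_iff_of_pos_left hls).mp h0
  refine ⟨by intro h; rw [h] at h1a'; linarith, ?_, ?_, ?_⟩
  · rw [Real.tan_eq_sin_div_cos, ← hsdef, ← hcdef]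
    rw [div_eq_div_iff (by positivity) (by positivity)]
    linear_combination key
  · rw [div_sub_div _ _ (by positivity) (by positivity), div_eq_div_iff (by positivity) (by positivity)]
    linear_combination (1 - a) * h2' 
  · rw [ha'def]
    field_simp
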